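/- Suppose E is finite dimensional, A(X,E) contains the constant functions, and there exists a complete norm ‖·‖ on A(X,E) with ‖·‖ ≥ ‖·‖_∞ such that (A(X,E), ‖·‖) has property (P) and ‖g·f‖ ≤ ‖g‖_{A(X)} ‖f‖ for all g ∈ A(X) and f ∈ A(X,E). Then φ(Y_d) is a finite set and every point of φ(Y_d) is a limit (non-isolated) point of X, where φ is the support map and Y_d = Y₁ ∖ (Y_cT ∩ Y_cS). -/

import Mathlib

open Set Filter Topology

/-- `B` together with the norm `nB` is a regular Banach function algebra on the
compact Hausdorff space `X`: it separates points (it contains the constants since it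
is a subalgebra), `nB` is a complete algebra norm on `B` dominating the sup norm, and
the regularity (partition of unity) property holds. -/
structure IsRegularBanachFunctionAlgebra {X : Type*} [TopologicalSpace X] [CompactSpace X]
    [T2Space X] (B : Subalgebra ℂ C(X, ℂ)) (nB : C(X, ℂ) → ℝ) : Prop where
  separates : ∀ x y : X, x ≠ y → ∃ f ∈ B, f x ≠ f y
  norm_nonneg : ∀ f ∈ B, 0 ≤ nB f
  norm_add_le : ∀ f ∈ B, ∀ g ∈ B, nB (f + g) ≤ nB f + nB g
  norm_smul : ∀ (c : ℂ), ∀ f ∈ B, nB (c • f) = ‖c‖ * nB f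
  norm_eq_zero_iff : ∀ f ∈ B, (nB f = 0 ↔ f = 0)
  norm_mul_le : ∀ f ∈ B, ∀ g ∈ B, nB (f * g) ≤ nB f * nB g
  sup_norm_le : ∀ f ∈ B, ‖f‖ ≤ nB f
  complete : ∀ u : ℕ → C(X, ℂ), (∀ n, u n ∈ B) →
    (∀ ε : ℝ, 0 < ε → ∃ N : ℕ, ∀ m ≥ N, ∀ n ≥ N, nB (u m - u n) < ε) →
    ∃ l ∈ B, ∀ ε : ℝ, 0 < ε → ∃ N : ℕ, ∀ n ≥ N, nB (u n - l) < ε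
  regular : ∀ K : Set X, IsCompact K → ∀ (n : ℕ) (U : Fin n → Set X),
    (∀ i, IsOpen (U i)) → K ⊆ ⋃ i, U i →
    ∃ g : Fin n → C(X, ℂ), (∀ i, g i ∈ B) ∧ (∀ i, closure {x | g i x ≠ 0} ⊆ U i) ∧
      ∀ x ∈ K, (∑ i, g i x) = 1

variable {X Y E : Type*} [TopologicalSpace X] [CompactSpace X] [T2Space X]
  [TopologicalSpace Y] [CompactSpace Y] [T2Space Y]
  [NormedAddCommGroup E] [NormedSpace ℂ E] [CompleteSpace E]
  (A : Submodule ℂ C(X, E))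

/-- The cozero set of a function in the subspace `A = A(X,E)` of `C(X,E)`. -/
def coz (f : ↥A) : Set X := {x | (f : C(X, E)) x ≠ 0}

/-- `T, S : A(X,E) → C(Y)` are jointly separating: `Tf · Sg = 0` on `Y` whenever `f`
and `g` have disjoint cozero sets. -/
def JointlySeparating (T S : ↥A →ₗ[ℂ] C(Y, ℂ)) : Prop :=
  ∀ f g : ↥A, coz A f ∩ coz A g = ∅ → ∀ y : Y, T f y * S g y = 0

/-- The set `Y₁ = (⋃_f coz(Tf)) ∩ (⋃_f coz(Sf))`. -/
def Y1 (T S : ↥A →ₗ[ℂ] C(Y, ℂ)) : Set Y :=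
  {y | (∃ f : ↥A, T f y ≠ 0) ∧ (∃ f : ↥A, S f y ≠ 0)}

/-- `x` is a support point of `y ∈ Y₁`: every neighborhood `V` of `x` admits
`f ∈ A(X,E)` with `coz(f) ⊆ V` and `Tf(y) ≠ 0` or `Sf(y) ≠ 0`. -/
def IsSupportPoint (T S : ↥A →ₗ[ℂ] C(Y, ℂ)) (y : Y) (x : X) : Prop :=
  ∀ V ∈ 𝓝 x, ∃ f : ↥A, coz A f ⊆ V ∧ (T f y ≠ 0 ∨ S f y ≠ 0)

/-- `(A(X,E), nn)` has property (P): for every `f ∈ A(X,E)` and `x ∈ X` with `f(x) = 0`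
there is a sequence `(fₙ)` in `A(X,E)`, each term vanishing on a neighborhood of `x`,
with `nn (fₙ - f) → 0`. -/
def HasPropertyP (A : Submodule ℂ C(X, E)) (nn : C(X, E) → ℝ) : Prop :=
  ∀ f : ↥A, ∀ x : X, (f : C(X, E)) x = 0 →
    ∃ u : ℕ → C(X, E), (∀ n, u n ∈ A) ∧ (∀ n, ∀ᶠ z in 𝓝 x, u n z = 0) ∧
      Filter.Tendsto (fun n => nn (u n - (f : C(X, E)))) Filter.atTop (𝓝 0)

/-- `nn` is a complete norm on the subspace `A = A(X,E)` of `C(X,E)` dominating the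
sup norm. -/
structure IsCompleteNormOn {X E : Type*} [TopologicalSpace X] [CompactSpace X] [T2Space X]
    [NormedAddCommGroup E] [NormedSpace ℂ E]
    (A : Submodule ℂ C(X, E)) (nn : C(X, E) → ℝ) : Prop where
  nonneg : ∀ f ∈ A, 0 ≤ nn f
  add_le : ∀ f ∈ A, ∀ g ∈ A, nn (f + g) ≤ nn f + nn g
  smul : ∀ (c : ℂ), ∀ f ∈ A, nn (c • f) = ‖c‖ * nn f
  eq_zero_iff : ∀ f ∈ A, (nn f = 0 ↔ f = 0)
  sup_norm_le : ∀ f ∈ A, ‖f‖ ≤ nn f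
  complete : ∀ u : ℕ → C(X, E), (∀ n, u n ∈ A) →
    (∀ ε : ℝ, 0 < ε → ∃ N : ℕ, ∀ m ≥ N, ∀ n ≥ N, nn (u m - u n) < ε) →
    ∃ l ∈ A, ∀ ε : ℝ, 0 < ε → ∃ N : ℕ, ∀ n ≥ N, nn (u n - l) < ε

/-! ### Auxiliary lemmas -/

section Top
set_option linter.unusedSectionVars false

lemma step_disj (S : Set X) (W : Set X) (hW : IsOpen W) (hSW : (S ∩ W).Infinite) :
    ∃ (x : X) (U W' : Set X), x ∈ S ∧ x ∈ U ∧ IsOpen U ∧ U ⊆ W ∧ IsOpen W' ∧ W' ⊆ W ∧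
      U ∩ W' = ∅ ∧ (S ∩ W').Infinite := by
  obtain ⟨a, ha⟩ := hSW.nonempty
  obtain ⟨b, hb⟩ := (hSW.diff (Set.finite_singleton a)).nonempty
  have hab : b ≠ a := fun h => hb.2 (by simp [h])
  -- open set W \ {b} contains a
  have hWb : IsOpen (W \ {b}) := hW.sdiff isClosed_singleton
  have haWb : a ∈ W \ {b} := ⟨ha.2, by simpa using hab.symm⟩
  obtain ⟨U, hUo, haU, hUc⟩ := normal_exists_closure_subset (isClosed_singleton (x := a)) hWb
    (by simpa using haWb)
  have hUW : U ⊆ W := subset_closure.trans (hUc.trans diff_subset)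
  by_cases hcase : (S ∩ closure U).Infinite
  · -- b is the chosen point
    have hbW : b ∈ W \ closure U := ⟨hb.1.2, fun hbc => (hUc hbc).2 rfl⟩
    obtain ⟨Ub, hUbo, hbUb, hUbc⟩ := normal_exists_closure_subset (isClosed_singleton (x := b))
      (hW.sdiff isClosed_closure) (by simpa using hbW)
    refine ⟨b, Ub, W \ closure Ub, hb.1.1, by simpa using hbUb, hUbo,
      (subset_closure.trans (hUbc.trans diff_subset)), hW.sdiff isClosed_closure,
      diff_subset, ?_, ?_⟩
    · apply Set.eq_empty_of_subset_empty
      rintro z ⟨hz1, hz2⟩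
      exact hz2.2 (subset_closure hz1)
    · refine hcase.mono ?_
      rintro z ⟨hz1, hz2⟩
      refine ⟨hz1, (hUc hz2).1, fun hzc => ?_⟩
      exact (hUbc hzc).2 hz2
  · -- a is the chosen point
    rw [Set.not_infinite] at hcase
    refine ⟨a, U, W \ closure U, ha.1, haU rfl, hUo, hUW, hW.sdiff isClosed_closure,
      diff_subset, ?_, ?_⟩
    · apply Set.eq_empty_of_subset_empty
      rintro z ⟨hz1, hz2⟩
      exact hz2.2 (subset_closure hz1)
    · refine ((hSW.diff hcase).mono ?_)
      rintro z ⟨⟨h1, h2⟩, h3⟩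
      exact ⟨h1, h2, fun hc => h3 ⟨h1, hc⟩⟩

lemma exists_disjoint_nhds_seq (S : Set X) (hS : S.Infinite) :
    ∃ (x : ℕ → X) (U : ℕ → Set X), (∀ n, x n ∈ S) ∧ (∀ n, IsOpen (U n)) ∧ (∀ n, x n ∈ U n) ∧
      ∀ m n, m < n → U m ∩ U n = ∅ := by
  let P := {W : Set X // IsOpen W ∧ (S ∩ W).Infinite}
  have step : ∀ p : P, ∃ q : X × Set X × P, q.1 ∈ S ∧ q.1 ∈ q.2.1 ∧ IsOpen q.2.1 ∧
      q.2.1 ⊆ p.1 ∧ (q.2.2.1 : Set X) ⊆ p.1 ∧ q.2.1 ∩ q.2.2.1 = ∅ := by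
    rintro ⟨W, hWo, hWi⟩
    obtain ⟨x, U, W', hxS, hxU, hUo, hUW, hW'o, hW'W, hUW', hSW'⟩ := step_disj S W hWo hWi
    exact ⟨⟨x, U, ⟨W', hW'o, hSW'⟩⟩, hxS, hxU, hUo, hUW, hW'W, hUW'⟩
  choose f h1 h2 h3 h4 h5 h6 using step
  have huniv : (S ∩ univ).Infinite := by simpa using hS
  let W : ℕ → P := fun n => Nat.rec ⟨univ, isOpen_univ, huniv⟩ (fun _ p => (f p).2.2) n
  have hWsucc : ∀ n, W (n + 1) = (f (W n)).2.2 := fun n => rfl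
  refine ⟨fun n => (f (W n)).1, fun n => (f (W n)).2.1, fun n => h1 _, fun n => h3 _,
    fun n => h2 _, ?_⟩
  have hmono : ∀ n m, m < n → ((W n).1 : Set X) ⊆ (W (m + 1)).1 := by
    intro n
    induction n with
    | zero => intro m hm; omega
    | succ k ih =>
      intro m hm
      rcases Nat.lt_succ_iff_lt_or_eq.mp hm with h | h
      · exact (by rw [hWsucc]; exact h5 (W k) : ((W (k+1)).1 : Set X) ⊆ (W k).1).trans (ih m h)
      · subst h; exact subset_rfl
  intro m n hmn
  apply Set.eq_empty_of_subset_empty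
  rintro z ⟨hz1, hz2⟩
  have : z ∈ ((W (m+1)).1 : Set X) := hmono n m hmn ((h4 (W n)) hz2)
  rw [hWsucc] at this
  rw [← h6 (W m)]
  exact ⟨hz1, this⟩

end Top


section Aux
set_option linter.unusedSectionVars false

lemma jsep_swap {T S : ↥A →ₗ[ℂ] C(Y, ℂ)} (h : JointlySeparating A T S) :
    JointlySeparating A S T := fun f g hfg y => by
  rw [mul_comm]
  exact h g f (by rwa [Set.inter_comm]) y

lemma y1_swap {T S : ↥A →ₗ[ℂ] C(Y, ℂ)} {y : Y} (h : y ∈ Y1 A T S) : y ∈ Y1 A S T :=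
  ⟨h.2, h.1⟩

lemma sp_swap {T S : ↥A →ₗ[ℂ] C(Y, ℂ)} {y : Y} {x : X}
    (h : IsSupportPoint A T S y x) : IsSupportPoint A S T y x := fun V hV => by
  obtain ⟨f, h1, h2⟩ := h V hV
  exact ⟨f, h1, h2.symm⟩

/-- A bump function from the regularity of `B`. -/
lemma exists_bump {B : Subalgebra ℂ C(X, ℂ)} {nB : C(X, ℂ) → ℝ}
    (hB : IsRegularBanachFunctionAlgebra B nB) {U : Set X} (hU : IsOpen U)
    {x : X} (hx : x ∈ U) :
    ∃ g : C(X, ℂ), g ∈ B ∧ (∀ z, g z ≠ 0 → z ∈ U) ∧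
      ∃ V, IsOpen V ∧ x ∈ V ∧ ∀ z ∈ V, g z = 1 := by
  obtain ⟨V, hVo, hxV, hVc⟩ := normal_exists_closure_subset (isClosed_singleton (x := x)) hU
    (by simpa using hx)
  obtain ⟨g, hgB, hgc, hgsum⟩ := hB.regular univ isCompact_univ 2 ![U, (closure V)ᶜ]
    (by
      intro i
      fin_cases i
      · exact hU
      · exact isClosed_closure.isOpen_compl)
    (by
      intro z _
      by_cases hz : z ∈ closure V
      · exact mem_iUnion.mpr ⟨0, hVc hz⟩
      · exact mem_iUnion.mpr ⟨1, hz⟩)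
  refine ⟨g 0, hgB 0, fun z hz => ?_, V, hVo, hxV rfl, fun z hz => ?_⟩
  · have := hgc 0 (subset_closure hz)
    simpa using this
  · have h1 : g 1 z = 0 := by
      by_contra h
      have := hgc 1 (subset_closure h)
      simp at this
      exact this (subset_closure hz)
    have hsum := hgsum z (mem_univ z)
    rw [Fin.sum_univ_two, h1, add_zero] at hsum
    exact hsum

/-- If `y ∈ Y₁` has support point `x`, then every open neighborhood of `x` carries a
function with cozero set inside it on which `S` does not vanish at `y`. -/
lemma exists_S_witness {B : Subalgebra ℂ C(X, ℂ)} {nB : C(X, ℂ) → ℝ}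
    (hB : IsRegularBanachFunctionAlgebra B nB)
    (hmod : ∀ g ∈ B, ∀ f : ↥A, g • (f : C(X, E)) ∈ A)
    {T S : ↥A →ₗ[ℂ] C(Y, ℂ)} (hTS : JointlySeparating A T S)
    {y : Y} (hy : y ∈ Y1 A T S) {x : X} (hsp : IsSupportPoint A T S y x)
    {U : Set X} (hU : IsOpen U) (hx : x ∈ U) :
    ∃ h : ↥A, (∀ z, (h : C(X, E)) z ≠ 0 → z ∈ U) ∧ S h y ≠ 0 := by
  by_contra hcon
  push_neg at hcon
  obtain ⟨f₀, hf₀⟩ := hy.2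
  obtain ⟨g, hgB, hgU, V, hVo, hxV, hg1⟩ := exists_bump hB hU hx
  have hVU : V ⊆ U := fun z hz => hgU z (by rw [hg1 z hz]; exact one_ne_zero)
  set p : ↥A := ⟨g • (f₀ : C(X, E)), hmod g hgB f₀⟩ with hp
  set q : ↥A := ⟨(1 - g) • (f₀ : C(X, E)), hmod _ (sub_mem (one_mem B) hgB) f₀⟩ with hq
  have hsum : f₀ = p + q := by
    apply Subtype.ext
    ext z
    simp [hp, hq, ContinuousMap.smul_apply', sub_smul]
  have hq0 : ∀ z ∈ V, (q : C(X, E)) z = 0 := by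
    intro z hz
    simp [hq, ContinuousMap.smul_apply', hg1 z hz]
  have hSp : S p y = 0 := by
    refine hcon p (fun z hz => hgU z fun hgz => ?_)
    rw [hp] at hz
    simp only [ContinuousMap.smul_apply', hgz, zero_smul] at hz
    exact hz rfl
  obtain ⟨k, hk1, hk2⟩ := hsp V (hVo.mem_nhds hxV)
  have hkT : T k y ≠ 0 := by
    rcases hk2 with h | h
    · exact h
    · exact absurd (hcon k (fun z hz => hVU (hk1 hz))) h
  have hSq : S q y = 0 := by
    have hdisj : coz A k ∩ coz A q = ∅ := by
      apply Set.eq_empty_of_subset_empty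
      rintro z ⟨hz1, hz2⟩
      exact hz2 (hq0 z (hk1 hz1))
    have := hTS k q hdisj y
    rcases mul_eq_zero.mp this with h | h
    · exact absurd h hkT
    · exact h
  apply hf₀
  rw [hsum, map_add]
  simp [ContinuousMap.add_apply, hSp, hSq]

/-- If `f` vanishes on an open neighborhood of the support point of `y`, then both
`Tf(y) = 0` and `Sf(y) = 0`. -/
lemma apply_eq_zero_of_vanishes {B : Subalgebra ℂ C(X, ℂ)} {nB : C(X, ℂ) → ℝ}
    (hB : IsRegularBanachFunctionAlgebra B nB)
    (hmod : ∀ g ∈ B, ∀ f : ↥A, g • (f : C(X, E)) ∈ A)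
    {T S : ↥A →ₗ[ℂ] C(Y, ℂ)} (hTS : JointlySeparating A T S)
    {y : Y} (hy : y ∈ Y1 A T S) {x : X} (hsp : IsSupportPoint A T S y x)
    (f : ↥A) {U : Set X} (hU : IsOpen U) (hx : x ∈ U)
    (hf : ∀ z ∈ U, (f : C(X, E)) z = 0) : T f y = 0 ∧ S f y = 0 := by
  constructor
  · obtain ⟨h, hh1, hh2⟩ := exists_S_witness A hB hmod hTS hy hsp hU hx
    have hdisj : coz A f ∩ coz A h = ∅ := by
      apply Set.eq_empty_of_subset_empty
      rintro z ⟨hz1, hz2⟩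
      exact hz1 (hf z (hh1 z hz2))
    rcases mul_eq_zero.mp (hTS f h hdisj y) with h' | h'
    · exact h'
    · exact absurd h' hh2
  · obtain ⟨h, hh1, hh2⟩ := exists_S_witness A hB hmod (jsep_swap A hTS) (y1_swap A hy) (sp_swap A hsp) hU hx
    have hdisj : coz A f ∩ coz A h = ∅ := by
      apply Set.eq_empty_of_subset_empty
      rintro z ⟨hz1, hz2⟩
      exact hz1 (hf z (hh1 z hz2))
    rcases mul_eq_zero.mp (jsep_swap A hTS f h hdisj y) with h' | h'
    · exact h'
    · exact absurd h' hh2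

/-- If `Rf(y)` vanishes whenever `f(x) = 0`, then (for finite dimensional `E`, `A`
containing the constants) the evaluation `f ↦ Rf(y)` is sup-norm continuous. -/
lemma continuous_eval_of_zero [FiniteDimensional ℂ E]
    (hconst : ∀ e : E, ContinuousMap.const X e ∈ A)
    (R : ↥A →ₗ[ℂ] C(Y, ℂ)) (y : Y) {x : X}
    (hz : ∀ f : ↥A, (f : C(X, E)) x = 0 → R f y = 0) :
    Continuous fun f : ↥A => R f y := by
  let cst : E →ₗ[ℂ] ↥A :=
    { toFun := fun e => ⟨ContinuousMap.const X e, hconst e⟩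
      map_add' := fun e e' => by apply Subtype.ext; ext z; simp
      map_smul' := fun c e => by apply Subtype.ext; ext z; simp }
  let L : E →ₗ[ℂ] ℂ :=
    { toFun := fun e => R (cst e) y
      map_add' := fun e e' => by
        show R (cst (e + e')) y = R (cst e) y + R (cst e') y
        rw [map_add, map_add, ContinuousMap.add_apply]
      map_smul' := fun c e => by
        show R (cst (c • e)) y = c • R (cst e) y
        rw [map_smul, map_smul, ContinuousMap.smul_apply] }
  have hLc : Continuous L := L.continuous_of_finiteDimensional
  have key : ∀ f : ↥A, R f y = L ((f : C(X, E)) x) := by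
    intro f
    have h0 : ((f - cst ((f : C(X, E)) x) : ↥A) : C(X, E)) x = 0 := by
      simp [cst]
    have := hz _ h0
    rw [map_sub, ContinuousMap.sub_apply, sub_eq_zero] at this
    exact this
  rw [show (fun f : ↥A => R f y) = fun f : ↥A => L ((f : C(X, E)) x) from funext key]
  exact hLc.comp ((continuous_eval_const x).comp continuous_subtype_val)

/-- If the evaluation `f ↦ Rf(y)` is `nn`-bounded and `R` kills functions vanishing
near `x`, then (by property (P)) `Rf(y) = 0` whenever `f(x) = 0`. -/
lemma zero_of_nn_bounded {nn : C(X, E) → ℝ} (hnn : IsCompleteNormOn A nn)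
    (hP : HasPropertyP A nn) (R : ↥A →ₗ[ℂ] C(Y, ℂ)) (y : Y) {x : X}
    (hvan : ∀ f : ↥A, ∀ U : Set X, IsOpen U → x ∈ U →
      (∀ z ∈ U, (f : C(X, E)) z = 0) → R f y = 0)
    {C : ℝ} (hC : 0 ≤ C) (hbd : ∀ f : ↥A, ‖R f y‖ ≤ C * nn f)
    (f : ↥A) (hfx : (f : C(X, E)) x = 0) : R f y = 0 := by
  obtain ⟨u, huA, hu0, hulim⟩ := hP f x hfx
  have hun : ∀ n, R ⟨u n, huA n⟩ y = 0 := by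
    intro n
    obtain ⟨t, ht0, hto, hxt⟩ := eventually_nhds_iff.mp (hu0 n)
    exact hvan ⟨u n, huA n⟩ t hto hxt ht0
  have hle : ∀ n : ℕ, ‖R f y‖ ≤ C * nn (u n - (f : C(X, E))) := by
    intro n
    have h1 : R f y = R (f - ⟨u n, huA n⟩) y := by
      rw [map_sub, ContinuousMap.sub_apply, hun n, sub_zero]
    have h2 : ((f - ⟨u n, huA n⟩ : ↥A) : C(X, E)) = (-1 : ℂ) • (u n - (f : C(X, E))) := by
      ext z
      simp
    rw [h1]
    calc ‖R (f - ⟨u n, huA n⟩) y‖ ≤ C * nn ((f - ⟨u n, huA n⟩ : ↥A) : C(X, E)) := hbd _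
      _ = C * nn (u n - (f : C(X, E))) := by
          rw [h2, hnn.smul (-1 : ℂ) _ (sub_mem (huA n) f.2)]
          simp
  have hlim : Filter.Tendsto (fun n => C * nn (u n - (f : C(X, E)))) Filter.atTop (𝓝 0) := by
    simpa using hulim.const_mul C
  have : ‖R f y‖ ≤ 0 := ge_of_tendsto hlim (Filter.Eventually.of_forall hle)
  simpa using le_antisymm this (norm_nonneg _)

lemma nn_zero {nn : C(X, E) → ℝ} (hnn : IsCompleteNormOn A nn) : nn 0 = 0 :=
  (hnn.eq_zero_iff 0 (zero_mem A)).mpr rfl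

lemma nn_sum_le {nn : C(X, E) → ℝ} (hnn : IsCompleteNormOn A nn)
    (s : Finset ℕ) (g : ℕ → C(X, E)) (hg : ∀ i, g i ∈ A) :
    nn (∑ i ∈ s, g i) ≤ ∑ i ∈ s, nn (g i) := by
  classical
  induction s using Finset.induction_on with
  | empty => simp [nn_zero A hnn]
  | insert _ _ hx ih =>
    rename_i a t
    rw [Finset.sum_insert hx, Finset.sum_insert hx]
    calc nn (g a + ∑ i ∈ t, g i) ≤ nn (g a) + nn (∑ i ∈ t, g i) :=
          hnn.add_le _ (hg a) _ (Submodule.sum_mem A fun i _ => hg i)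
      _ ≤ nn (g a) + ∑ i ∈ t, nn (g i) := by linarith
  
lemma nn_neg {nn : C(X, E) → ℝ} (hnn : IsCompleteNormOn A nn)
    (f : C(X, E)) (hf : f ∈ A) : nn (-f) = nn f := by
  have := hnn.smul (-1 : ℂ) f hf
  simpa using this

/-- Localized unboundedness: if the evaluation at `y` is `nn`-unbounded and kills
functions vanishing near `φ y`, then there are functions of arbitrarily small `nn`-norm
supported in any given neighborhood of `φ y` with arbitrarily large value. -/
lemma exists_local_big {B : Subalgebra ℂ C(X, ℂ)} {nB : C(X, ℂ) → ℝ}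
    (hB : IsRegularBanachFunctionAlgebra B nB)
    (hmod : ∀ g ∈ B, ∀ f : ↥A, g • (f : C(X, E)) ∈ A)
    {nn : C(X, E) → ℝ} (hnn : IsCompleteNormOn A nn)
    (hsubmul : ∀ g ∈ B, ∀ f : ↥A, nn (g • (f : C(X, E))) ≤ nB g * nn (f : C(X, E)))
    (R : ↥A →ₗ[ℂ] C(Y, ℂ)) (y : Y) {x : X}
    (hvan : ∀ f : ↥A, ∀ U : Set X, IsOpen U → x ∈ U →
      (∀ z ∈ U, (f : C(X, E)) z = 0) → R f y = 0)
    (hunb : ¬∃ C : ℝ, ∀ f : ↥A, ‖R f y‖ ≤ C * nn f)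
    {U : Set X} (hU : IsOpen U) (hx : x ∈ U) {ε : ℝ} (hε : 0 < ε) (M : ℝ) :
    ∃ f : ↥A, (∀ z, z ∉ U → (f : C(X, E)) z = 0) ∧ nn f ≤ ε ∧ M < ‖R f y‖ := by
  push_neg at hunb
  obtain ⟨g, hgB, hgU, V, hVo, hxV, hg1⟩ := exists_bump hB hU hx
  have hnBg : 0 ≤ nB g := hB.norm_nonneg g hgB
  set C₀ : ℝ := ((nB g + 1) / ε) * (|M| + 1) with hC₀
  have hC₀pos : 0 < C₀ := by positivity
  obtain ⟨f, hf⟩ := hunb C₀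
  have hnnf_pos : 0 < nn f := by
    rcases (hnn.nonneg f f.2).lt_or_eq with h | h
    · exact h
    · exfalso
      have hf0 : (f : C(X, E)) = 0 := (hnn.eq_zero_iff f f.2).mp h.symm
      have : f = 0 := Subtype.ext hf0
      rw [this] at hf
      simp only [map_zero, ContinuousMap.zero_apply, norm_zero, ZeroMemClass.coe_zero,
        nn_zero A hnn, mul_zero] at hf
      exact lt_irrefl 0 hf
  set c : ℝ := ε / ((nB g + 1) * nn f) with hc
  have hcpos : 0 < c := by positivity
  set f₁ : ↥A := (c : ℂ) • f with hf₁
  have hnnf₁ : nn f₁ = ε / (nB g + 1) := by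
    have : ((f₁ : ↥A) : C(X, E)) = (c : ℂ) • (f : C(X, E)) := rfl
    rw [this, hnn.smul _ _ f.2]
    have : ‖(c : ℂ)‖ = c := by
      rw [Complex.norm_real, Real.norm_of_nonneg hcpos.le]
    rw [this, hc]
    field_simp
  have hRf₁ : |M| + 1 < ‖R f₁ y‖ := by
    have : R f₁ y = (c : ℂ) * R f y := by
      rw [hf₁, map_smul, ContinuousMap.smul_apply, smul_eq_mul]
    rw [this, norm_mul]
    have hcn : ‖(c : ℂ)‖ = c := by
      rw [Complex.norm_real, Real.norm_of_nonneg hcpos.le]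
    rw [hcn]
    have h1 : C₀ * nn ↑f < ‖R f y‖ := hf
    have h2 : c * (C₀ * nn f) = |M| + 1 := by
      rw [hc, hC₀]
      field_simp
    calc |M| + 1 = c * (C₀ * nn f) := h2.symm
      _ < c * ‖R f y‖ := by
          apply mul_lt_mul_of_pos_left h1 hcpos
  set p : ↥A := ⟨g • (f₁ : C(X, E)), hmod g hgB f₁⟩ with hp
  have hp0 : ∀ z, z ∉ U → (p : C(X, E)) z = 0 := by
    intro z hz
    have hgz : g z = 0 := by
      by_contra h
      exact hz (hgU z h)
    simp [hp, ContinuousMap.smul_apply', hgz]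
  have hpnn : nn p ≤ ε := by
    calc nn (p : C(X, E)) ≤ nB g * nn (f₁ : C(X, E)) := hsubmul g hgB f₁
      _ = nB g * (ε / (nB g + 1)) := by rw [hnnf₁]
      _ ≤ ε := by
          rw [div_eq_inv_mul, ← mul_assoc]
          have h1 : nB g * (nB g + 1)⁻¹ ≤ 1 := by
            rw [mul_inv_le_iff₀ (by linarith)]
            linarith
          nlinarith [hε.le]
  have hRp : R p y = R f₁ y := by
    have hdiff : ∀ z ∈ V, ((f₁ - p : ↥A) : C(X, E)) z = 0 := by
      intro z hz
      have : ((f₁ - p : ↥A) : C(X, E)) z = (f₁ : C(X, E)) z - g z • (f₁ : C(X, E)) z := rfl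
      rw [this, hg1 z hz, one_smul, sub_self]
    have h0 := hvan (f₁ - p) V hVo hxV hdiff
    rw [map_sub, ContinuousMap.sub_apply, sub_eq_zero] at h0
    exact h0.symm
  refine ⟨p, hp0, hpnn, ?_⟩
  rw [hRp]
  calc M ≤ |M| := le_abs_self M
    _ < |M| + 1 := by linarith
    _ < ‖R f₁ y‖ := hRf₁

/-- The finiteness theorem: if evaluation at each `y ∈ D` is `nn`-unbounded (and kills
functions vanishing near the support point `φ y`), then `φ '' D` is finite. -/
lemma finite_image_of_unbounded {B : Subalgebra ℂ C(X, ℂ)} {nB : C(X, ℂ) → ℝ}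
    (hB : IsRegularBanachFunctionAlgebra B nB)
    (hmod : ∀ g ∈ B, ∀ f : ↥A, g • (f : C(X, E)) ∈ A)
    {nn : C(X, E) → ℝ} (hnn : IsCompleteNormOn A nn)
    (hsubmul : ∀ g ∈ B, ∀ f : ↥A, nn (g • (f : C(X, E))) ≤ nB g * nn (f : C(X, E)))
    (R : ↥A →ₗ[ℂ] C(Y, ℂ)) (φ : Y → X) (D : Set Y)
    (hvan : ∀ y ∈ D, ∀ f : ↥A, ∀ U : Set X, IsOpen U → φ y ∈ U →
      (∀ z ∈ U, (f : C(X, E)) z = 0) → R f y = 0)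
    (hunb : ∀ y ∈ D, ¬∃ C : ℝ, ∀ f : ↥A, ‖R f y‖ ≤ C * nn f) :
    (φ '' D).Finite := by
  by_contra hinf
  rw [← Set.not_infinite, not_not] at hinf
  obtain ⟨x, U, hxS, hUo, hxU, hdisj⟩ := exists_disjoint_nhds_seq _ hinf
  have hyex : ∀ n : ℕ, ∃ y, y ∈ D ∧ φ y = x n := by
    intro n
    obtain ⟨y, hy, hxy⟩ := hxS n
    exact ⟨y, hy, hxy⟩
  choose ys hysD hysφ using hyex
  have hfex : ∀ n : ℕ, ∃ f : ↥A, (∀ z, z ∉ U n → (f : C(X, E)) z = 0) ∧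
      nn f ≤ (1/2 : ℝ)^n ∧ (n : ℝ) < ‖R f (ys n)‖ := by
    intro n
    refine exists_local_big A hB hmod hnn hsubmul R (ys n)
      (x := φ (ys n)) (fun f V hV hxV h0 => hvan (ys n) (hysD n) f V hV hxV h0)
      (hunb (ys n) (hysD n)) (hUo n) (by rw [hysφ n]; exact hxU n) (by positivity) n
  choose f hfsupp hfnn hfbig using hfex
  set u : ℕ → C(X, E) := fun k => ∑ i ∈ Finset.range k, (f i : C(X, E)) with hu
  have huA : ∀ k, u k ∈ A := fun k => Submodule.sum_mem A fun i _ => (f i).2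
  have hdiffA : ∀ k m, u m - u k ∈ A := fun k m => sub_mem (huA m) (huA k)
  have hbound : ∀ k m, k ≤ m → nn (u m - u k) ≤ 2 * (1/2 : ℝ)^k := by
    intro k m h
    have heq : u m - u k = ∑ i ∈ Finset.Ico k m, (f i : C(X, E)) := by
      rw [hu, Finset.sum_Ico_eq_sub _ h]
    rw [heq]
    calc nn (∑ i ∈ Finset.Ico k m, (f i : C(X, E)))
        ≤ ∑ i ∈ Finset.Ico k m, nn (f i : C(X, E)) :=
          nn_sum_le A hnn _ _ (fun i => (f i).2)
      _ ≤ ∑ i ∈ Finset.Ico k m, (1/2 : ℝ)^i :=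
          Finset.sum_le_sum (fun i _ => hfnn i)
      _ = (1/2 : ℝ)^k * ∑ j ∈ Finset.range (m - k), (1/2 : ℝ)^j := by
          rw [Finset.sum_Ico_eq_sum_range]
          rw [Finset.mul_sum]
          exact Finset.sum_congr rfl (fun j _ => by rw [pow_add])
      _ ≤ (1/2 : ℝ)^k * 2 := by
          have h2 := sum_geometric_two_le (m - k)
          have hpk : (0:ℝ) ≤ (1/2 : ℝ)^k := by positivity
          nlinarith
      _ = 2 * (1/2 : ℝ)^k := by ring
  have hcauchy : ∀ ε : ℝ, 0 < ε → ∃ N : ℕ, ∀ m ≥ N, ∀ n ≥ N, nn (u m - u n) < ε := by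
    intro ε hε
    obtain ⟨K, hK⟩ := exists_pow_lt_of_lt_one (show (0:ℝ) < ε/2 by linarith)
      (show (1/2 : ℝ) < 1 by norm_num)
    refine ⟨K, fun m hm n hn => ?_⟩
    have key : ∀ a b : ℕ, K ≤ a → a ≤ b → nn (u b - u a) < ε := by
      intro a b ha hab
      calc nn (u b - u a) ≤ 2 * (1/2 : ℝ)^a := hbound a b hab
        _ ≤ 2 * (1/2 : ℝ)^K := by
            have := pow_le_pow_of_le_one (show (0:ℝ) ≤ 1/2 by norm_num)
              (show (1/2:ℝ) ≤ 1 by norm_num) ha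
            linarith
        _ < ε := by linarith
    rcases le_total n m with h | h
    · exact key n m hn h
    · rw [show u m - u n = -(u n - u m) by abel, nn_neg A hnn _ (hdiffA m n)]
      exact key m n hm h
  obtain ⟨l, hlA, hconv⟩ := hnn.complete u huA hcauchy
  set F : ↥A := ⟨l, hlA⟩ with hF
  have hlz : ∀ n : ℕ, ∀ z ∈ U n, l z = (f n : C(X, E)) z := by
    intro n z hz
    have hukz : ∀ k, n < k → u k z = (f n : C(X, E)) z := by
      intro k hk
      rw [hu]
      show (∑ i ∈ Finset.range k, (f i : C(X, E))) z = _
      rw [ContinuousMap.sum_apply]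
      refine Finset.sum_eq_single_of_mem n (Finset.mem_range.mpr hk) ?_
      intro i _ hin
      apply hfsupp i
      intro hzi
      rcases Ne.lt_or_gt hin with h | h
      · have := hdisj i n h
        exact absurd (Set.mem_inter hzi hz) (by rw [this]; exact Set.notMem_empty z)
      · have := hdisj n i h
        exact absurd (Set.mem_inter hz hzi) (by rw [this]; exact Set.notMem_empty z)
    have hnorm : ∀ ε : ℝ, 0 < ε → ‖(f n : C(X, E)) z - l z‖ < ε := by
      intro ε hε
      obtain ⟨N, hN⟩ := hconv ε hε
      set k : ℕ := max N (n + 1) with hk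
      have h1 : nn (u k - l) < ε := hN k (le_max_left _ _)
      have h2 : u k z = (f n : C(X, E)) z := hukz k (by omega)
      have h3 : ‖(u k - l) z‖ ≤ ‖u k - l‖ := ContinuousMap.norm_coe_le_norm _ z
      have h4 : ‖u k - l‖ ≤ nn (u k - l) := hnn.sup_norm_le _ (sub_mem (huA k) hlA)
      have h5 : (u k - l) z = (f n : C(X, E)) z - l z := by
        rw [ContinuousMap.sub_apply, h2]
      rw [← h5]
      exact lt_of_le_of_lt (h3.trans h4) h1
    by_contra hne
    have hpos : 0 < ‖(f n : C(X, E)) z - l z‖ := by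
      rw [norm_pos_iff, sub_ne_zero]
      exact fun h => hne h.symm
    exact lt_irrefl _ (hnorm _ hpos)
  have hbig : ∀ n : ℕ, (n : ℝ) < ‖R F (ys n)‖ := by
    intro n
    have hvanish : ∀ z ∈ U n, ((F - f n : ↥A) : C(X, E)) z = 0 := by
      intro z hz
      have : ((F - f n : ↥A) : C(X, E)) z = l z - (f n : C(X, E)) z := rfl
      rw [this, hlz n z hz, sub_self]
    have h0 : R (F - f n) (ys n) = 0 :=
      hvan (ys n) (hysD n) (F - f n) (U n) (hUo n) (by rw [hysφ n]; exact hxU n) hvanish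
    rw [map_sub, ContinuousMap.sub_apply, sub_eq_zero] at h0
    rw [h0]
    exact hfbig n
  obtain ⟨n, hn⟩ := exists_nat_gt ‖R F‖
  exact absurd ((hbig n).trans_le (ContinuousMap.norm_coe_le_norm _ _)) (lt_asymm hn)

end Aux
/-- **Theorem 3.13 (i).** Suppose `E` is finite dimensional, `A(X,E)` contains the
constants and carries a complete norm `nn ≥ ‖·‖_∞` with property (P) and
`nn(g·f) ≤ ‖g‖_{A(X)} nn(f)`.  Then `φ(Y_d)` is finite and consists of limit
(non-isolated) points of `X`, where `Y_d = Y₁ \ (Y_cT ∩ Y_cS)`. -/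
theorem image_Yd_finite
    [FiniteDimensional ℂ E]
    (B : Subalgebra ℂ C(X, ℂ)) (nB : C(X, ℂ) → ℝ)
    (hB : IsRegularBanachFunctionAlgebra B nB)
    (hmod : ∀ g ∈ B, ∀ f : ↥A, g • (f : C(X, E)) ∈ A)
    (hconst : ∀ e : E, ContinuousMap.const X e ∈ A)
    (nn : C(X, E) → ℝ) (hnn : IsCompleteNormOn A nn)
    (hP : HasPropertyP A nn)
    (hsubmul : ∀ g ∈ B, ∀ f : ↥A, nn (g • (f : C(X, E))) ≤ nB g * nn (f : C(X, E)))
    (T S : ↥A →ₗ[ℂ] C(Y, ℂ)) (hTS : JointlySeparating A T S)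
    (φ : Y → X) (hφ : ∀ y ∈ Y1 A T S, IsSupportPoint A T S y (φ y)) :
    ∀ Yd : Set Y,
      Yd = Y1 A T S \ ({y ∈ Y1 A T S | Continuous fun f : ↥A => T f y} ∩
          {y ∈ Y1 A T S | Continuous fun f : ↥A => S f y}) →
      (φ '' Yd).Finite ∧ ∀ x ∈ φ '' Yd, (𝓝[≠] x).NeBot := by
  intro Yd hYd
  have hvanT : ∀ y ∈ Y1 A T S, ∀ f : ↥A, ∀ U : Set X, IsOpen U → φ y ∈ U →
      (∀ z ∈ U, (f : C(X, E)) z = 0) → T f y = 0 := fun y hy f U hU hx h0 =>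
    (apply_eq_zero_of_vanishes A hB hmod hTS hy (hφ y hy) f hU hx h0).1
  have hvanS : ∀ y ∈ Y1 A T S, ∀ f : ↥A, ∀ U : Set X, IsOpen U → φ y ∈ U →
      (∀ z ∈ U, (f : C(X, E)) z = 0) → S f y = 0 := fun y hy f U hU hx h0 =>
    (apply_eq_zero_of_vanishes A hB hmod hTS hy (hφ y hy) f hU hx h0).2
  have hcontT : ∀ y ∈ Y1 A T S, (∃ C : ℝ, ∀ f : ↥A, ‖T f y‖ ≤ C * nn f) →
      Continuous fun f : ↥A => T f y := by
    intro y hy ⟨C, hC⟩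
    refine continuous_eval_of_zero A hconst T y (x := φ y) ?_
    refine zero_of_nn_bounded A hnn hP T y (x := φ y)
      (fun f U hU hx h0 => hvanT y hy f U hU hx h0) (le_max_right C 0) ?_
    intro f
    calc ‖T f y‖ ≤ C * nn f := hC f
      _ ≤ max C 0 * nn f := by
          have := hnn.nonneg f f.2
          exact mul_le_mul_of_nonneg_right (le_max_left C 0) this
  have hcontS : ∀ y ∈ Y1 A T S, (∃ C : ℝ, ∀ f : ↥A, ‖S f y‖ ≤ C * nn f) →
      Continuous fun f : ↥A => S f y := by
    intro y hy ⟨C, hC⟩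
    refine continuous_eval_of_zero A hconst S y (x := φ y) ?_
    refine zero_of_nn_bounded A hnn hP S y (x := φ y)
      (fun f U hU hx h0 => hvanS y hy f U hU hx h0) (le_max_right C 0) ?_
    intro f
    calc ‖S f y‖ ≤ C * nn f := hC f
      _ ≤ max C 0 * nn f := by
          have := hnn.nonneg f f.2
          exact mul_le_mul_of_nonneg_right (le_max_left C 0) this
  constructor
  · -- finiteness
    set DT : Set Y := {y | y ∈ Y1 A T S ∧ ¬∃ C : ℝ, ∀ f : ↥A, ‖T f y‖ ≤ C * nn f} with hDT
    set DS : Set Y := {y | y ∈ Y1 A T S ∧ ¬∃ C : ℝ, ∀ f : ↥A, ‖S f y‖ ≤ C * nn f} with hDS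
    have hsub : Yd ⊆ DT ∪ DS := by
      intro y hy
      rw [hYd] at hy
      obtain ⟨hy1, hy2⟩ := hy
      by_contra hcon
      rw [Set.mem_union] at hcon
      push_neg at hcon
      obtain ⟨hyT, hyS⟩ := hcon
      have hbT : ∃ C : ℝ, ∀ f : ↥A, ‖T f y‖ ≤ C * nn f := by
        by_contra h
        exact hyT ⟨hy1, h⟩
      have hbS : ∃ C : ℝ, ∀ f : ↥A, ‖S f y‖ ≤ C * nn f := by
        by_contra h
        exact hyS ⟨hy1, h⟩
      exact hy2 ⟨⟨hy1, hcontT y hy1 hbT⟩, ⟨hy1, hcontS y hy1 hbS⟩⟩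
    have hfinT : (φ '' DT).Finite :=
      finite_image_of_unbounded A hB hmod hnn hsubmul T φ DT
        (fun y hy => hvanT y hy.1) (fun y hy => hy.2)
    have hfinS : (φ '' DS).Finite :=
      finite_image_of_unbounded A hB hmod hnn hsubmul S φ DS
        (fun y hy => hvanS y hy.1) (fun y hy => hy.2)
    refine (hfinT.union hfinS).subset ?_
    rw [← Set.image_union]
    exact Set.image_mono hsub
  · -- non-isolated
    intro x hx
    obtain ⟨y, hyYd, rfl⟩ := hx
    rw [hYd] at hyYd
    obtain ⟨hy1, hy2⟩ := hyYd
    by_contra hnb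
    rw [Filter.not_neBot] at hnb
    have hopen : IsOpen ({φ y} : Set X) := (isOpen_singleton_iff_punctured_nhds (φ y)).mpr hnb
    have hzT : ∀ f : ↥A, (f : C(X, E)) (φ y) = 0 → T f y = 0 := by
      intro f hf
      refine hvanT y hy1 f {φ y} hopen rfl (fun z hz => ?_)
      rw [Set.mem_singleton_iff] at hz
      rwa [hz]
    have hzS : ∀ f : ↥A, (f : C(X, E)) (φ y) = 0 → S f y = 0 := by
      intro f hf
      refine hvanS y hy1 f {φ y} hopen rfl (fun z hz => ?_)
      rw [Set.mem_singleton_iff] at hz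
      rwa [hz]
    exact hy2 ⟨⟨hy1, continuous_eval_of_zero A hconst T y hzT⟩,
      ⟨hy1, continuous_eval_of_zero A hconst S y hzS⟩⟩
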